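/- Let n < m ≤ N, Φ ∈ ℝ^{N×m} with ΦᵀΦ = I_m, S ∈ ℝ^{N×n} with SᵀS = I_n, M := SᵀΦ with MMᵀ invertible, M⁺ := Mᵀ(MMᵀ)⁻¹, and Z ∈ ℝ^{m×(m−n)} with ZᵀZ = I_{m−n} and MZ = 0. If u ∈ ℝ^N lies in the range of Φ (equivalently ΦΦᵀu = u), then the S-DEIM reconstruction with the optimal kernel vector ẑ := ZZᵀΦᵀu is exact: ΦM⁺Sᵀu + Φẑ = u. -/
import Mathlib


open Matrix

/-- Exact reconstruction (Corollary 3.9): with `n < m ≤ N`, if `u` lies in the range of `Φ`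
(i.e. `ΦΦᵀu = u`), then the S-DEIM reconstruction with the optimal kernel vector
`ẑ = ZZᵀΦᵀu` is exact: `ΦM⁺Sᵀu + Φẑ = u`. -/
theorem SDEIM_exact_reconstruction (N m n : ℕ) (hnm : n < m) (hmN : m ≤ N)
    (Φ : Matrix (Fin N) (Fin m) ℝ) (S : Matrix (Fin N) (Fin n) ℝ)
    (hΦ : Φᵀ * Φ = 1) (hS : Sᵀ * S = 1)
    (M : Matrix (Fin n) (Fin m) ℝ) (hM : M = Sᵀ * Φ)
    (hMM : IsUnit (M * Mᵀ))
    (Mplus : Matrix (Fin m) (Fin n) ℝ) (hMp : Mplus = Mᵀ * (M * Mᵀ)⁻¹)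
    (Z : Matrix (Fin m) (Fin (m - n)) ℝ) (hZ : Zᵀ * Z = 1) (hMZ : M * Z = 0)
    (u : Fin N → ℝ) (hu : Φ *ᵥ (Φᵀ *ᵥ u) = u) :
    Φ *ᵥ (Mplus *ᵥ (Sᵀ *ᵥ u)) + Φ *ᵥ ((Z * Zᵀ * Φᵀ) *ᵥ u) = u := by
  set c : Fin m → ℝ := Φᵀ *ᵥ u with hc
  have hdet : IsUnit (M * Mᵀ).det := (Matrix.isUnit_iff_isUnit_det _).mp hMM
  have hinv : (M * Mᵀ) * (M * Mᵀ)⁻¹ = 1 := Matrix.mul_nonsing_inv _ hdet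
  -- any vector in ker M is fixed by Z Zᵀ
  have hker : ∀ r : Fin m → ℝ, M *ᵥ r = 0 → (Z * Zᵀ) *ᵥ r = r := by
    intro r hr
    have hZinj : Function.Injective (Matrix.mulVecLin Z) := by
      intro x y hxy
      have h := congrArg (fun v => Zᵀ *ᵥ v) hxy
      simpa [Matrix.mulVec_mulVec, hZ] using h
    have hMsurj : Function.Surjective (Matrix.mulVecLin M) := by
      intro y
      refine ⟨Mᵀ *ᵥ ((M * Mᵀ)⁻¹ *ᵥ y), ?_⟩
      simp [Matrix.mulVec_mulVec, ← Matrix.mul_assoc, hinv]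
    have hle : LinearMap.range (Matrix.mulVecLin Z) ≤
        LinearMap.ker (Matrix.mulVecLin M) := by
      rintro x ⟨w, rfl⟩
      simp [LinearMap.mem_ker, Matrix.mulVec_mulVec, hMZ]
    have h1 : Module.finrank ℝ (LinearMap.range (Matrix.mulVecLin Z)) = m - n := by
      rw [LinearMap.finrank_range_of_inj hZinj]; simp
    have h2 : Module.finrank ℝ (LinearMap.ker (Matrix.mulVecLin M)) = m - n := by
      have h3 := LinearMap.finrank_range_add_finrank_ker (Matrix.mulVecLin M)
      rw [LinearMap.range_eq_top.mpr hMsurj] at h3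
      simp only [finrank_top, Module.finrank_fin_fun] at h3
      omega
    have heq := Submodule.eq_of_le_of_finrank_eq hle (by rw [h1, h2])
    have hrmem : r ∈ LinearMap.range (Matrix.mulVecLin Z) := by
      rw [heq]
      simpa [LinearMap.mem_ker] using hr
    obtain ⟨w, rfl⟩ := hrmem
    simp [Matrix.mulVec_mulVec, Matrix.mul_assoc, hZ]
  -- Sᵀ u = M c
  have hSu : Sᵀ *ᵥ u = M *ᵥ c := by
    rw [hM]
    conv_lhs => rw [← hu]
    simp [Matrix.mulVec_mulVec, hc, Matrix.mul_assoc]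
  -- the residual r is in ker M
  set r : Fin m → ℝ := c - Mplus *ᵥ (M *ᵥ c) with hr
  have hMMp : ∀ v : Fin n → ℝ, M *ᵥ (Mplus *ᵥ v) = v := by
    intro v
    rw [hMp]
    simp [Matrix.mulVec_mulVec, ← Matrix.mul_assoc, hinv]
  have hrker : M *ᵥ r = 0 := by
    rw [hr, Matrix.mulVec_sub, hMMp, sub_self]
  have hZr : (Z * Zᵀ) *ᵥ r = r := hker r hrker
  -- Zᵀ Mplus = 0
  have hZMp : ∀ v : Fin n → ℝ, (Z * Zᵀ) *ᵥ (Mplus *ᵥ v) = 0 := by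
    intro v
    rw [hMp]
    have hZM : Zᵀ * Mᵀ = 0 := by
      have := congrArg Matrix.transpose hMZ
      simpa [Matrix.transpose_mul] using this
    simp [Matrix.mulVec_mulVec, Matrix.mul_assoc, ← Matrix.mul_assoc Zᵀ Mᵀ, hZM]
  -- ZZᵀ c = r
  have hZc : (Z * Zᵀ) *ᵥ c = r := by
    have : c = (Mplus *ᵥ (M *ᵥ c)) + r := by rw [hr]; abel
    rw [this, Matrix.mulVec_add, hZMp, hZr, zero_add]
  -- conclude
  have key : Mplus *ᵥ (Sᵀ *ᵥ u) + (Z * Zᵀ * Φᵀ) *ᵥ u = c := by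
    rw [hSu]
    have : (Z * Zᵀ * Φᵀ) *ᵥ u = (Z * Zᵀ) *ᵥ c := by
      rw [hc, ← Matrix.mulVec_mulVec]
    rw [this, hZc, hr]
    abel
  calc Φ *ᵥ (Mplus *ᵥ (Sᵀ *ᵥ u)) + Φ *ᵥ ((Z * Zᵀ * Φᵀ) *ᵥ u)
      = Φ *ᵥ (Mplus *ᵥ (Sᵀ *ᵥ u) + (Z * Zᵀ * Φᵀ) *ᵥ u) := by
        rw [Matrix.mulVec_add]
    _ = Φ *ᵥ c := by rw [key]
    _ = u := hu
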